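/- Let L ≥ 1 be an integer and let φ, φ̃ ∈ (0,1) and ψ, ψ̃ > 0 be real numbers with (φ,ψ) ≠ (φ̃,ψ̃). Then for every λ ∈ ℂ and every nonzero vector x ∈ ℂ^{2L} satisfying A_L(φ,ψ) x = (1−λ) A_L(φ̃,ψ̃) x, one has |λ|² < ((φ̃−φ)² + (ψ̃−ψ)²) / ((1−φ̃)² + ψ̃²). (This is the per-eigenvalue form of the tracking ParaOpt convergence bound ρ < ρ*.) -/

import Mathlib

open Matrix

/-- The L×L matrix with ones on the diagonal, −φ on the first subdiagonal, zeros elsewhere. -/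
def lowerBidiag (L : ℕ) (φ : ℝ) : Matrix (Fin L) (Fin L) ℝ :=
  fun i j => if i = j then 1 else if (i : ℕ) = (j : ℕ) + 1 then -φ else 0

/-- The tracking ParaOpt block matrix A_L(φ,ψ) = [[B_L(φ), ψI],[−ψI, B_L(φ)ᵀ]]. -/
def trackingMat (L : ℕ) (φ ψ : ℝ) : Matrix (Fin L ⊕ Fin L) (Fin L ⊕ Fin L) ℝ :=
  Matrix.fromBlocks (lowerBidiag L φ) (ψ • (1 : Matrix (Fin L) (Fin L) ℝ))
    (-(ψ • (1 : Matrix (Fin L) (Fin L) ℝ))) (lowerBidiag L φ)ᵀ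

namespace TrackAux
open Complex Finset

variable {L : ℕ}

def sub1 (i : Fin L) : Fin L := ⟨(i : ℕ) - 1, by have := i.isLt; omega⟩
def add1 (i : Fin L) : Fin L := ⟨((i : ℕ) + 1) % L, Nat.mod_lt _ (by have := i.isLt; omega)⟩

lemma add1_sub1 (i : Fin L) (h : 0 < (i : ℕ)) : add1 (sub1 i) = i := by
  have hlt := i.isLt
  simp only [add1, sub1, Fin.ext_iff]
  have h2 : (i : ℕ) - 1 + 1 = (i : ℕ) := by omega
  rw [h2, Nat.mod_eq_of_lt hlt]

lemma sub1_add1 (j : Fin L) (h : (j : ℕ) + 1 < L) : sub1 (add1 j) = j := by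
  simp only [add1, sub1, Fin.ext_iff]
  have : ((j : ℕ) + 1) % L = (j : ℕ) + 1 := Nat.mod_eq_of_lt h
  omega

lemma add1_val (j : Fin L) (h : (j : ℕ) + 1 < L) : (add1 j : ℕ) = (j : ℕ) + 1 := by
  simp [add1, Nat.mod_eq_of_lt h]

lemma reindex (g : Fin L → ℝ) :
    ∑ i ∈ Finset.univ.filter (fun i : Fin L => 0 < (i : ℕ)), g (sub1 i)
      = ∑ j ∈ Finset.univ.filter (fun j : Fin L => (j : ℕ) + 1 < L), g j := by
  refine Finset.sum_nbij' (i := sub1) (j := add1) ?_ ?_ ?_ ?_ ?_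
  · intro a ha
    simp only [mem_filter, mem_univ, true_and] at ha ⊢
    have := a.isLt; simp [sub1]; omega
  · intro a ha
    simp only [mem_filter, mem_univ, true_and] at ha ⊢
    rw [add1_val a ha]; omega
  · intro a ha
    simp only [mem_filter, mem_univ, true_and] at ha
    exact add1_sub1 a ha
  · intro a ha
    simp only [mem_filter, mem_univ, true_and] at ha
    exact sub1_add1 a ha
  · intro a ha; rfl

def kvec (x : Fin L ⊕ Fin L → ℂ) : Fin L ⊕ Fin L → ℂ :=
  Sum.elim (fun i => if 0 < (i : ℕ) then x (.inl (sub1 i)) else 0)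
           (fun i => if (i : ℕ) + 1 < L then x (.inr (add1 i)) else 0)

def jvec (x : Fin L ⊕ Fin L → ℂ) : Fin L ⊕ Fin L → ℂ :=
  Sum.elim (fun i => x (.inr i)) (fun i => -x (.inl i))

lemma bidiag_sum (φ : ℝ) (u : Fin L → ℂ) (i : Fin L) :
    ∑ j, ((lowerBidiag L φ i j : ℝ) : ℂ) * u j
      = u i - (φ : ℂ) * (if 0 < (i : ℕ) then u (sub1 i) else 0) := by
  have h : ∀ j : Fin L, ((lowerBidiag L φ i j : ℝ) : ℂ) * u j
      = (if i = j then u j else 0) + (if (i : ℕ) = (j : ℕ) + 1 then (-(φ:ℂ)) * u j else 0) := by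
    intro j
    unfold lowerBidiag
    rcases eq_or_ne i j with h1 | h1
    · have h2 : ¬ ((i : ℕ) = (j : ℕ) + 1) := by omega
      simp [h1, h2]
    · have h1' : ¬ i = j := h1
      rcases eq_or_ne ((i : ℕ)) ((j : ℕ) + 1) with h2 | h2
      · simp [h1', h2]
      · simp [h1', h2]
  rw [Finset.sum_congr rfl (fun j _ => h j), Finset.sum_add_distrib]
  rw [Finset.sum_ite_eq Finset.univ i u]
  by_cases hi : 0 < (i : ℕ)
  · rw [Finset.sum_eq_single (sub1 i)]
    · have hcond : (i : ℕ) = ((sub1 i : Fin L) : ℕ) + 1 := by simp [sub1]; omega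
      rw [if_pos hcond, if_pos hi]
      simp; ring
    · intro b _ hb
      have : ¬ ((i : ℕ) = (b : ℕ) + 1) := by
        intro hc
        apply hb
        simp [sub1, Fin.ext_iff]; omega
      simp [this]
    · intro hmem; exact absurd (Finset.mem_univ _) hmem
  · rw [Finset.sum_eq_zero, if_neg hi]
    · simp
    · intro b _
      have : ¬ ((i : ℕ) = (b : ℕ) + 1) := by omega
      simp [this]

lemma bidiagT_sum (φ : ℝ) (v : Fin L → ℂ) (i : Fin L) :
    ∑ j, (((lowerBidiag L φ)ᵀ i j : ℝ) : ℂ) * v j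
      = v i - (φ : ℂ) * (if (i : ℕ) + 1 < L then v (add1 i) else 0) := by
  have h : ∀ j : Fin L, (((lowerBidiag L φ)ᵀ i j : ℝ) : ℂ) * v j
      = (if j = i then v j else 0) + (if (j : ℕ) = (i : ℕ) + 1 then (-(φ:ℂ)) * v j else 0) := by
    intro j
    simp only [Matrix.transpose_apply]
    unfold lowerBidiag
    rcases eq_or_ne j i with h1 | h1
    · have h2 : ¬ ((j : ℕ) = (i : ℕ) + 1) := by omega
      simp [h1, h2]
    · rcases eq_or_ne ((j : ℕ)) ((i : ℕ) + 1) with h2 | h2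
      · simp [h1, h2]
      · simp [h1, h2]
  rw [Finset.sum_congr rfl (fun j _ => h j), Finset.sum_add_distrib]
  rw [Finset.sum_ite_eq' Finset.univ i v]
  by_cases hi : (i : ℕ) + 1 < L
  · rw [Finset.sum_eq_single (add1 i)]
    · have hv : ((add1 i : Fin L) : ℕ) = (i : ℕ) + 1 := by simp [add1, Nat.mod_eq_of_lt hi]
      rw [if_pos hv, if_pos hi]
      simp; ring
    · intro b _ hb
      have : ¬ ((b : ℕ) = (i : ℕ) + 1) := by
        intro hc
        apply hb
        simp [add1, Fin.ext_iff, Nat.mod_eq_of_lt hi]; omega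
      simp [this]
    · intro hmem; exact absurd (Finset.mem_univ _) hmem
  · rw [Finset.sum_eq_zero, if_neg hi]
    · simp
    · intro b _
      have : ¬ ((b : ℕ) = (i : ℕ) + 1) := by have := b.isLt; omega
      simp [this]

lemma mulVec_tracking (φ ψ : ℝ) (x : Fin L ⊕ Fin L → ℂ) (s : Fin L ⊕ Fin L) :
    ((trackingMat L φ ψ).map Complex.ofReal).mulVec x s
      = x s - (φ : ℂ) * kvec x s + (ψ : ℂ) * jvec x s := by
  cases s with
  | inl i =>
      have : ((trackingMat L φ ψ).map Complex.ofReal).mulVec x (Sum.inl i)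
          = ∑ j : Fin L, ((lowerBidiag L φ i j : ℝ) : ℂ) * x (.inl j)
            + ∑ j : Fin L, ((ψ * (if i = j then (1:ℝ) else 0) : ℝ) : ℂ) * x (.inr j) := by
        simp [Matrix.mulVec, dotProduct, Fintype.sum_sum_type, trackingMat,
          Matrix.fromBlocks, Matrix.one_apply, Matrix.smul_apply, smul_eq_mul]
      rw [this, bidiag_sum]
      have h2 : ∑ j : Fin L, ((ψ * (if i = j then (1:ℝ) else 0) : ℝ) : ℂ) * x (.inr j)
          = (ψ : ℂ) * x (.inr i) := by
        rw [Finset.sum_congr rfl (fun j _ => by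
          rcases eq_or_ne i j with h | h
          · simp [h]
          · simp [h] : ∀ j ∈ Finset.univ, ((ψ * (if i = j then (1:ℝ) else 0) : ℝ) : ℂ) * x (.inr j) = if i = j then (ψ:ℂ) * x (.inr j) else 0)]
        rw [Finset.sum_ite_eq Finset.univ i]
        simp
      rw [h2]
      simp [kvec, jvec]
  | inr i =>
      have : ((trackingMat L φ ψ).map Complex.ofReal).mulVec x (Sum.inr i)
          = ∑ j : Fin L, ((-(ψ * (if i = j then (1:ℝ) else 0)) : ℝ) : ℂ) * x (.inl j)
            + ∑ j : Fin L, (((lowerBidiag L φ)ᵀ i j : ℝ) : ℂ) * x (.inr j) := by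
        simp [Matrix.mulVec, dotProduct, Fintype.sum_sum_type, trackingMat,
          Matrix.fromBlocks, Matrix.one_apply, Matrix.smul_apply, smul_eq_mul]
      rw [this, bidiagT_sum]
      have h2 : ∑ j : Fin L, ((-(ψ * (if i = j then (1:ℝ) else 0)) : ℝ) : ℂ) * x (.inl j)
          = -((ψ : ℂ) * x (.inl i)) := by
        rw [Finset.sum_congr rfl (fun j _ => by
          rcases eq_or_ne i j with h | h
          · simp [h]
          · simp [h] : ∀ j ∈ Finset.univ, ((-(ψ * (if i = j then (1:ℝ) else 0)) : ℝ) : ℂ) * x (.inl j) = if i = j then -((ψ:ℂ) * x (.inl j)) else 0)]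
        rw [Finset.sum_ite_eq Finset.univ i]
        simp
      rw [h2]
      simp [kvec, jvec]
      ring

lemma re2_symm (a b : ℂ) : (a * (starRingEnd ℂ) b).re = (b * (starRingEnd ℂ) a).re := by
  simp [Complex.mul_re, Complex.conj_re, Complex.conj_im]
  ring

lemma nsq_expand (c d : ℝ) (a b e : ℂ) :
    Complex.normSq (a - (c:ℂ) * b + (d:ℂ) * e)
      = Complex.normSq a + c^2 * Complex.normSq b + d^2 * Complex.normSq e
        - 2*c*(a * (starRingEnd ℂ) b).re + 2*d*(a * (starRingEnd ℂ) e).re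
        - 2*c*d*(b * (starRingEnd ℂ) e).re := by
  simp [Complex.normSq_apply, Complex.mul_re, Complex.mul_im, Complex.add_re, Complex.add_im,
    Complex.sub_re, Complex.sub_im, Complex.conj_re, Complex.conj_im,
    Complex.ofReal_re, Complex.ofReal_im]
  ring

lemma nsq_two (c d : ℝ) (b e : ℂ) :
    Complex.normSq ((c:ℂ) * b + (d:ℂ) * e)
      = c^2 * Complex.normSq b + d^2 * Complex.normSq e + 2*c*d*(b * (starRingEnd ℂ) e).re := by
  simp [Complex.normSq_apply, Complex.mul_re, Complex.mul_im, Complex.add_re, Complex.add_im,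
    Complex.conj_re, Complex.conj_im, Complex.ofReal_re, Complex.ofReal_im]
  ring

lemma sum_jn (x : Fin L ⊕ Fin L → ℂ) :
    ∑ s, Complex.normSq (jvec x s) = ∑ s, Complex.normSq (x s) := by
  rw [Fintype.sum_sum_type, Fintype.sum_sum_type]
  simp [jvec]
  exact add_comm _ _

lemma sum_xj (x : Fin L ⊕ Fin L → ℂ) :
    ∑ s, (x s * (starRingEnd ℂ) (jvec x s)).re = 0 := by
  rw [Fintype.sum_sum_type]
  simp only [jvec, Sum.elim_inl, Sum.elim_inr, map_neg, mul_neg, Complex.neg_re]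
  have e : ∀ i : Fin L, (x (.inr i) * (starRingEnd ℂ) (x (.inl i))).re
      = (x (.inl i) * (starRingEnd ℂ) (x (.inr i))).re := fun i => re2_symm _ _
  simp only [e, Finset.sum_neg_distrib]
  ring

lemma sum_kj (x : Fin L ⊕ Fin L → ℂ) :
    ∑ s, (kvec x s * (starRingEnd ℂ) (jvec x s)).re = 0 := by
  rw [Fintype.sum_sum_type]
  simp only [kvec, jvec, Sum.elim_inl, Sum.elim_inr, map_neg, mul_neg, Complex.neg_re]
  have e1 : ∀ i : Fin L,
      ((if 0 < (i:ℕ) then x (.inl (sub1 i)) else 0) * (starRingEnd ℂ) (x (.inr i))).re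
      = if 0 < (i:ℕ) then (x (.inl (sub1 i)) * (starRingEnd ℂ) (x (.inr i))).re else 0 := by
    intro i; split_ifs <;> simp
  have e2 : ∀ i : Fin L,
      -((if (i:ℕ)+1 < L then x (.inr (add1 i)) else 0) * (starRingEnd ℂ) (x (.inl i))).re
      = -(if (i:ℕ)+1 < L then (x (.inl i) * (starRingEnd ℂ) (x (.inr (add1 i)))).re else 0) := by
    intro i
    split_ifs with h
    · rw [re2_symm]
    · simp
  simp only [e1, e2, Finset.sum_neg_distrib]
  rw [← Finset.sum_filter, ← Finset.sum_filter]
  have e3 : ∑ i ∈ Finset.univ.filter (fun i : Fin L => 0 < (i:ℕ)),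
      (x (.inl (sub1 i)) * (starRingEnd ℂ) (x (.inr i))).re
      = ∑ i ∈ Finset.univ.filter (fun i : Fin L => 0 < (i:ℕ)),
      (fun j => (x (.inl j) * (starRingEnd ℂ) (x (.inr (add1 j)))).re) (sub1 i) := by
    refine Finset.sum_congr rfl fun i hi => ?_
    simp only [mem_filter, mem_univ, true_and] at hi
    show _ = (x (.inl (sub1 i)) * (starRingEnd ℂ) (x (.inr (add1 (sub1 i))))).re
    rw [add1_sub1 i hi]
  rw [e3, reindex (fun j => (x (.inl j) * (starRingEnd ℂ) (x (.inr (add1 j)))).re)]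
  ring

lemma sum_m_le (x : Fin L ⊕ Fin L → ℂ) :
    ∑ s, Complex.normSq (kvec x s) ≤ ∑ s, Complex.normSq (x s) := by
  rw [Fintype.sum_sum_type, Fintype.sum_sum_type]
  simp only [kvec, Sum.elim_inl, Sum.elim_inr]
  have e1 : ∀ i : Fin L, Complex.normSq (if 0 < (i:ℕ) then x (.inl (sub1 i)) else 0)
      = if 0 < (i:ℕ) then Complex.normSq (x (.inl (sub1 i))) else 0 := by
    intro i; split_ifs <;> simp
  have e2 : ∀ i : Fin L, Complex.normSq (if (i:ℕ)+1 < L then x (.inr (add1 i)) else 0)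
      = if (i:ℕ)+1 < L then Complex.normSq (x (.inr (add1 i))) else 0 := by
    intro i; split_ifs <;> simp
  simp only [e1, e2]
  rw [← Finset.sum_filter, ← Finset.sum_filter]
  have h1 : ∑ i ∈ Finset.univ.filter (fun i : Fin L => 0 < (i:ℕ)),
      Complex.normSq (x (.inl (sub1 i)))
      = ∑ j ∈ Finset.univ.filter (fun j : Fin L => (j:ℕ)+1 < L),
        Complex.normSq (x (.inl j)) := reindex (fun j => Complex.normSq (x (.inl j)))
  have h2 : ∑ i ∈ Finset.univ.filter (fun i : Fin L => (i:ℕ)+1 < L),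
      Complex.normSq (x (.inr (add1 i)))
      = ∑ i ∈ Finset.univ.filter (fun i : Fin L => 0 < (i:ℕ)),
        Complex.normSq (x (.inr i)) := by
    rw [← reindex (fun j => Complex.normSq (x (.inr (add1 j))))]
    refine Finset.sum_congr rfl fun i hi => ?_
    simp only [mem_filter, mem_univ, true_and] at hi
    rw [add1_sub1 i hi]
  rw [h1, h2]
  have b1 : ∑ j ∈ Finset.univ.filter (fun j : Fin L => (j:ℕ)+1 < L),
      Complex.normSq (x (.inl j)) ≤ ∑ j : Fin L, Complex.normSq (x (.inl j)) :=
    Finset.sum_le_sum_of_subset_of_nonneg (Finset.filter_subset _ _)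
      (fun i _ _ => Complex.normSq_nonneg _)
  have b2 : ∑ i ∈ Finset.univ.filter (fun i : Fin L => 0 < (i:ℕ)),
      Complex.normSq (x (.inr i)) ≤ ∑ i : Fin L, Complex.normSq (x (.inr i)) :=
    Finset.sum_le_sum_of_subset_of_nonneg (Finset.filter_subset _ _)
      (fun i _ _ => Complex.normSq_nonneg _)
  linarith

lemma sum_t_pos (x : Fin L ⊕ Fin L → ℂ) (hx : x ≠ 0) :
    0 < ∑ s, Complex.normSq (x s - kvec x s) := by
  rcases (Finset.sum_nonneg (fun (s : Fin L ⊕ Fin L) (_ : s ∈ Finset.univ) =>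
      Complex.normSq_nonneg (x s - kvec x s))).lt_or_eq with h | h
  · exact h
  exfalso
  have hall : ∀ s, x s = kvec x s := by
    intro s
    have h0 := (Finset.sum_eq_zero_iff_of_nonneg
      (fun (s : Fin L ⊕ Fin L) (_ : s ∈ Finset.univ) =>
        Complex.normSq_nonneg (x s - kvec x s))).mp h.symm s (Finset.mem_univ s)
    have h1 : x s - kvec x s = 0 := Complex.normSq_eq_zero.mp h0
    exact sub_eq_zero.mp h1
  have hu : ∀ k : ℕ, ∀ i : Fin L, (i : ℕ) = k → x (.inl i) = 0 := by
    intro k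
    induction k with
    | zero =>
        intro i hi
        have h0 : ¬ (0 < (i:ℕ)) := by omega
        simpa [kvec, h0] using hall (.inl i)
    | succ k ih =>
        intro i hi
        have h0 : 0 < (i:ℕ) := by omega
        have hs := hall (.inl i)
        rw [show kvec x (.inl i) = x (.inl (sub1 i)) by simp [kvec, h0]] at hs
        rw [hs]
        exact ih (sub1 i) (by simp [sub1]; omega)
  have hv : ∀ d : ℕ, ∀ i : Fin L, (i : ℕ) + d + 1 = L → x (.inr i) = 0 := by
    intro d
    induction d with
    | zero =>
        intro i hi
        have h0 : ¬ ((i:ℕ) + 1 < L) := by omega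
        simpa [kvec, h0] using hall (.inr i)
    | succ d ih =>
        intro i hi
        have h0 : (i:ℕ) + 1 < L := by omega
        have hs := hall (.inr i)
        rw [show kvec x (.inr i) = x (.inr (add1 i)) by simp [kvec, h0]] at hs
        rw [hs]
        exact ih (add1 i) (by rw [add1_val i h0]; omega)
  apply hx
  funext s
  cases s with
  | inl i => exact hu (i : ℕ) i rfl
  | inr i => exact hv (L - 1 - (i:ℕ)) i (by have := i.isLt; omega)


end TrackAux

theorem tracking_paraopt_eigenvalue_bound
    (L : ℕ) (hL : 1 ≤ L) (φ ψ φt ψt : ℝ)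
    (hφ0 : 0 < φ) (hφ1 : φ < 1) (hφt0 : 0 < φt) (hφt1 : φt < 1)
    (hψ : 0 < ψ) (hψt : 0 < ψt) (hne : (φ, ψ) ≠ (φt, ψt))
    (lam : ℂ) (x : (Fin L ⊕ Fin L) → ℂ) (hx : x ≠ 0)
    (heq : ((trackingMat L φ ψ).map Complex.ofReal).mulVec x =
      (1 - lam) • ((trackingMat L φt ψt).map Complex.ofReal).mulVec x) :
    ‖lam‖ ^ 2 < ((φt - φ) ^ 2 + (ψt - ψ) ^ 2) / ((1 - φt) ^ 2 + ψt ^ 2) := by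
  classical
  set kx := TrackAux.kvec x with hkx_def
  set jx := TrackAux.jvec x with hjx_def
  -- pointwise eigen-equation
  have heqs : ∀ s, lam * (x s - (φt:ℂ) * kx s + (ψt:ℂ) * jx s)
      = ((φ:ℂ) - (φt:ℂ)) * kx s + ((ψt:ℂ) - (ψ:ℂ)) * jx s := by
    intro s
    have h := congrFun heq s
    rw [TrackAux.mulVec_tracking, Pi.smul_apply, TrackAux.mulVec_tracking, smul_eq_mul] at h
    rw [hkx_def, hjx_def]
    linear_combination h
  set n : ℝ := ∑ s, Complex.normSq (x s) with hn_def
  set m : ℝ := ∑ s, Complex.normSq (kx s) with hm_def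
  set r : ℝ := ∑ s, (x s * (starRingEnd ℂ) (kx s)).re with hr_def
  set t : ℝ := ∑ s, Complex.normSq (x s - kx s) with ht_def
  set D : ℝ := ∑ s, Complex.normSq (x s - (φt:ℂ) * kx s + (ψt:ℂ) * jx s) with hD_def
  have hn : 0 < n := by
    obtain ⟨s0, hs0⟩ := Function.ne_iff.mp hx
    have h1 : 0 < Complex.normSq (x s0) := Complex.normSq_pos.mpr hs0
    exact lt_of_lt_of_le h1 (Finset.single_le_sum
      (f := fun s => Complex.normSq (x s))
      (fun s _ => Complex.normSq_nonneg _) (Finset.mem_univ s0))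
  have hmn : m ≤ n := TrackAux.sum_m_le x
  have htpos : 0 < t := TrackAux.sum_t_pos x hx
  have ht_eq : t = n + m - 2 * r := by
    rw [ht_def, hn_def, hm_def, hr_def]
    simp only [Complex.normSq_sub]
    rw [Finset.sum_sub_distrib, Finset.sum_add_distrib, ← Finset.mul_sum]
  have hD_eq : D = (1 + ψt^2) * n - 2 * φt * r + φt^2 * m := by
    rw [hD_def, hn_def, hm_def, hr_def]
    simp only [TrackAux.nsq_expand φt ψt, Finset.sum_sub_distrib, Finset.sum_add_distrib,
      ← Finset.mul_sum]
    rw [hjx_def, hkx_def, TrackAux.sum_jn x, TrackAux.sum_xj x, TrackAux.sum_kj x]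
    ring
  have key1 : Complex.normSq lam * D = (φ - φt)^2 * m + (ψt - ψ)^2 * n := by
    have e : ∀ s, Complex.normSq lam
          * Complex.normSq (x s - (φt:ℂ) * kx s + (ψt:ℂ) * jx s)
        = Complex.normSq (((φ - φt : ℝ):ℂ) * kx s + ((ψt - ψ : ℝ):ℂ) * jx s) := by
      intro s
      rw [← Complex.normSq_mul, heqs s]
      push_cast
      ring_nf
    rw [hD_def, Finset.mul_sum]
    rw [Finset.sum_congr rfl (fun s _ => e s)]
    simp only [TrackAux.nsq_two (φ - φt) (ψt - ψ)]
    rw [Finset.sum_add_distrib, Finset.sum_add_distrib, ← Finset.mul_sum, ← Finset.mul_sum,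
      ← Finset.mul_sum]
    rw [hjx_def, hkx_def, TrackAux.sum_jn x, TrackAux.sum_kj x]
    rw [hm_def, hn_def]
    ring
  have hm0 : 0 ≤ m := by
    rw [hm_def]; exact Finset.sum_nonneg fun s _ => Complex.normSq_nonneg _
  clear_value kx jx n m r t D
  have hQ : 0 < (1 - φt)^2 + ψt^2 := by nlinarith [sq_nonneg (1 - φt), mul_pos hψt hψt]
  have hD2 : D = (1 + ψt^2) * n - φt * (n + m - t) + φt^2 * m := by
    rw [hD_eq]; linear_combination (-φt) * ht_eq
  have hDpos : 0 < D := by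
    have h1 : 0 ≤ n - φt * m := by nlinarith
    rw [hD2]
    have h2 : 0 ≤ (1 - φt) * (n - φt * m) :=
      mul_nonneg (by linarith) h1
    have h3 : 0 < φt * t := mul_pos hφt0 htpos
    have h4 : 0 < ψt * ψt * n := mul_pos (mul_pos hψt hψt) hn
    nlinarith [h2, h3, h4]
  have key2 : ((φ - φt)^2 * m + (ψt - ψ)^2 * n) * ((1 - φt)^2 + ψt^2)
      < ((φt - φ)^2 + (ψt - ψ)^2) * D := by
    have hCα : 0 < (1 + ψt^2 - φt) * (n - m) + φt * t := by
      have h2 : 0 ≤ (1 + ψt^2 - φt) * (n - m) :=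
        mul_nonneg (by nlinarith [sq_nonneg ψt]) (by linarith)
      have h3 : 0 < φt * t := mul_pos hφt0 htpos
      linarith
    have hCβ : 0 < φt * (1 - φt) * (n - m) + φt * t := by
      have h2 : 0 ≤ φt * (1 - φt) * (n - m) :=
        mul_nonneg (mul_nonneg hφt0.le (by linarith)) (by linarith)
      have h3 : 0 < φt * t := mul_pos hφt0 htpos
      linarith
    have hid : ((φt - φ)^2 + (ψt - ψ)^2) * D
        - ((φ - φt)^2 * m + (ψt - ψ)^2 * n) * ((1 - φt)^2 + ψt^2)
        = (φ - φt)^2 * ((1 + ψt^2 - φt) * (n - m) + φt * t)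
          + (ψt - ψ)^2 * (φt * (1 - φt) * (n - m) + φt * t) := by
      rw [hD2]; ring
    have hab : φ ≠ φt ∨ ψ ≠ ψt := by
      by_contra hc
      push_neg at hc
      exact hne (Prod.ext hc.1 hc.2)
    rcases hab with hab | hab
    · have h1 : 0 < (φ - φt)^2 :=
        lt_of_le_of_ne (sq_nonneg _) (Ne.symm (pow_ne_zero 2 (sub_ne_zero.mpr hab)))
      linarith [mul_pos h1 hCα, mul_nonneg (sq_nonneg (ψt - ψ)) hCβ.le, hid]
    · have h1 : 0 < (ψt - ψ)^2 :=
        lt_of_le_of_ne (sq_nonneg _) (Ne.symm (pow_ne_zero 2 (sub_ne_zero.mpr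
          (fun hcc => hab hcc.symm))))
      linarith [mul_pos h1 hCβ, mul_nonneg (sq_nonneg (φ - φt)) hCα.le, hid]
  have hρ : ‖lam‖ ^ 2 = ((φ - φt)^2 * m + (ψt - ψ)^2 * n) / D := by
    rw [Complex.sq_norm, eq_div_iff hDpos.ne']
    exact key1
  rw [hρ, div_lt_div_iff₀ hDpos hQ]
  exact key2
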